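/- arXiv:2210.06268 — 2 statements merged into one kernel-verified Lean document; each statement's English description precedes it below -/
import Mathlib

section
/- The manifest behavior with respect to the control variable c of the canonical distributed controller (the interconnection through the variables (s_i, k_i) of the local canonical controllers C_i^can = projection onto (c_i,s_i,k_i) of P_i interconnected with K_i through w_i) equals the projection onto c of the interconnection of the manifest plant behavior (P_I)_{(w,c)} with the desired manifest behavior (K_I)_w through w. -/
/-- The manifest behavior with respect to `c` of the canonical distributed
controller (interconnection through `(s,k)` of the local canonical
controllers) equals the projection onto `c` of the interconnection of the
manifest plant behavior with the desired manifest behavior through `w`. -/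
theorem statement1 {ι : Type*} [Fintype ι]
    {W Cv : ι → Type*} {S K : Type*}
    (P : ∀ i, Set (W i × S × Cv i)) (Kb : ∀ i, Set (W i × K))
    (Ccan : ∀ i, Set (Cv i × S × K))
    (hCcan : ∀ i, Ccan i =
      {x : Cv i × S × K | ∃ w : W i, (w, x.2.1, x.1) ∈ P i ∧ (w, x.2.2) ∈ Kb i}) :
    {c : ∀ i, Cv i | ∃ (s : S) (k : K), ∀ i, (c i, s, k) ∈ Ccan i} =
      {c : ∀ i, Cv i | ∃ w : ∀ i, W i,
        (∃ s : S, ∀ i, (w i, s, c i) ∈ P i) ∧ (∃ k : K, ∀ i, (w i, k) ∈ Kb i)} := by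
  ext c
  simp only [Set.mem_setOf_eq, hCcan]
  constructor
  · rintro ⟨s, k, h⟩
    choose w hw1 hw2 using h
    exact ⟨w, ⟨s, hw1⟩, ⟨k, hw2⟩⟩
  · rintro ⟨w, ⟨s, hs⟩, ⟨k, hk⟩⟩
    exact ⟨s, k, fun i => ⟨w i, hs i, hk i⟩⟩
end

section
/- Conversely, if the stacked matrix satisfies rank [A₁; B₁; A₂; B₂] = rank [A₁; B₁] + rank [A₂; B₂], then the plant-interconnection rank condition rank [[R₁,M₁,0,0,S₁],[0,0,R₂,M₂,S₂]] = rank [R₁ M₁ S₁] + rank [R₂ M₂ S₂] holds and the desired-behavior rank condition rank [[W₁,0,K₁],[0,W₂,K₂]] = rank [W₁ K₁] + rank [W₂ K₂] holds. -/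
open Matrix

noncomputable section

variable {w1 w2 c1 c2 sn kn g1 g2 h1 h2 : ℕ}

abbrev RF := RatFunc ℝ

/-- `A₁ = [M₁ 0 S₁ 0 R₁ 0]` with column blocks `(c₁, c₂, s, k, w₁, w₂)`. -/
def rowA1 (M1 : Matrix (Fin g1) (Fin c1) RF) (S1 : Matrix (Fin g1) (Fin sn) RF)
    (R1 : Matrix (Fin g1) (Fin w1) RF) :
    Matrix (Fin g1) (Fin c1 ⊕ Fin c2 ⊕ Fin sn ⊕ Fin kn ⊕ Fin w1 ⊕ Fin w2) RF :=
  Matrix.of fun i =>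
    Sum.elim (M1 i) (Sum.elim 0 (Sum.elim (S1 i) (Sum.elim 0 (Sum.elim (R1 i) 0))))

/-- `B₁ = [0 0 0 K₁ W₁ 0]` with column blocks `(c₁, c₂, s, k, w₁, w₂)`. -/
def rowB1 (K1 : Matrix (Fin h1) (Fin kn) RF) (W1 : Matrix (Fin h1) (Fin w1) RF) :
    Matrix (Fin h1) (Fin c1 ⊕ Fin c2 ⊕ Fin sn ⊕ Fin kn ⊕ Fin w1 ⊕ Fin w2) RF :=
  Matrix.of fun i =>
    Sum.elim 0 (Sum.elim 0 (Sum.elim 0 (Sum.elim (K1 i) (Sum.elim (W1 i) 0))))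

/-- `A₂ = [0 M₂ S₂ 0 0 R₂]` with column blocks `(c₁, c₂, s, k, w₁, w₂)`. -/
def rowA2 (M2 : Matrix (Fin g2) (Fin c2) RF) (S2 : Matrix (Fin g2) (Fin sn) RF)
    (R2 : Matrix (Fin g2) (Fin w2) RF) :
    Matrix (Fin g2) (Fin c1 ⊕ Fin c2 ⊕ Fin sn ⊕ Fin kn ⊕ Fin w1 ⊕ Fin w2) RF :=
  Matrix.of fun i =>
    Sum.elim 0 (Sum.elim (M2 i) (Sum.elim (S2 i) (Sum.elim 0 (Sum.elim 0 (R2 i)))))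

/-- `B₂ = [0 0 0 K₂ 0 W₂]` with column blocks `(c₁, c₂, s, k, w₁, w₂)`. -/
def rowB2 (K2 : Matrix (Fin h2) (Fin kn) RF) (W2 : Matrix (Fin h2) (Fin w2) RF) :
    Matrix (Fin h2) (Fin c1 ⊕ Fin c2 ⊕ Fin sn ⊕ Fin kn ⊕ Fin w1 ⊕ Fin w2) RF :=
  Matrix.of fun i =>
    Sum.elim 0 (Sum.elim 0 (Sum.elim 0 (Sum.elim (K2 i) (Sum.elim 0 (W2 i)))))

/-- `[R₁ M₁ 0 0 S₁]` with column blocks `(w₁, c₁, w₂, c₂, s)`. -/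
def plantRow1 (R1 : Matrix (Fin g1) (Fin w1) RF) (M1 : Matrix (Fin g1) (Fin c1) RF)
    (S1 : Matrix (Fin g1) (Fin sn) RF) :
    Matrix (Fin g1) (Fin w1 ⊕ Fin c1 ⊕ Fin w2 ⊕ Fin c2 ⊕ Fin sn) RF :=
  Matrix.of fun i =>
    Sum.elim (R1 i) (Sum.elim (M1 i) (Sum.elim 0 (Sum.elim 0 (S1 i))))

/-- `[0 0 R₂ M₂ S₂]` with column blocks `(w₁, c₁, w₂, c₂, s)`. -/
def plantRow2 (R2 : Matrix (Fin g2) (Fin w2) RF) (M2 : Matrix (Fin g2) (Fin c2) RF)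
    (S2 : Matrix (Fin g2) (Fin sn) RF) :
    Matrix (Fin g2) (Fin w1 ⊕ Fin c1 ⊕ Fin w2 ⊕ Fin c2 ⊕ Fin sn) RF :=
  Matrix.of fun i =>
    Sum.elim 0 (Sum.elim 0 (Sum.elim (R2 i) (Sum.elim (M2 i) (S2 i))))

/-- `[W₁ 0 K₁]` with column blocks `(w₁, w₂, k)`. -/
def desRow1 (W1 : Matrix (Fin h1) (Fin w1) RF) (K1 : Matrix (Fin h1) (Fin kn) RF) :
    Matrix (Fin h1) (Fin w1 ⊕ Fin w2 ⊕ Fin kn) RF :=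
  Matrix.of fun i => Sum.elim (W1 i) (Sum.elim 0 (K1 i))

/-- `[0 W₂ K₂]` with column blocks `(w₁, w₂, k)`. -/
def desRow2 (W2 : Matrix (Fin h2) (Fin w2) RF) (K2 : Matrix (Fin h2) (Fin kn) RF) :
    Matrix (Fin h2) (Fin w1 ⊕ Fin w2 ⊕ Fin kn) RF :=
  Matrix.of fun i => Sum.elim 0 (Sum.elim (W2 i) (K2 i))

end

section MyAux
open Matrix Module

section AuxGeneral
variable {K : Type*} [Field K]

lemma range_mulVecLin_fromColumns {m n1 n2 : Type*} [Fintype n1] [Fintype n2]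
    (A : Matrix m n1 K) (B : Matrix m n2 K) :
    LinearMap.range (fromCols A B).mulVecLin =
      LinearMap.range A.mulVecLin ⊔ LinearMap.range B.mulVecLin := by
  apply le_antisymm
  · rintro _ ⟨x, rfl⟩
    have hx : x = Sum.elim (x ∘ Sum.inl) (x ∘ Sum.inr) := by ext (j | j) <;> rfl
    rw [mulVecLin_apply, hx, fromCols_mulVec_sumElim]
    exact Submodule.add_mem_sup ⟨_, rfl⟩ ⟨_, rfl⟩
  · rw [sup_le_iff]
    constructor
    · rintro _ ⟨x, rfl⟩
      exact ⟨Sum.elim x 0, by simp⟩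
    · rintro _ ⟨x, rfl⟩
      exact ⟨Sum.elim 0 x, by simp⟩

/-- The row space of a matrix. -/
noncomputable def rowSpace {m n : Type*} [Fintype m] (A : Matrix m n K) :
    Submodule K (n → K) :=
  LinearMap.range Aᵀ.mulVecLin

lemma rank_eq_finrank_rowSpace {m n : Type*} [Fintype m] [Fintype n] (A : Matrix m n K) :
    A.rank = finrank K (rowSpace A) := by
  rw [← rank_transpose]; rfl

lemma rowSpace_fromRows {m1 m2 n : Type*} [Fintype m1] [Fintype m2]
    (A : Matrix m1 n K) (B : Matrix m2 n K) :
    rowSpace (fromRows A B) = rowSpace A ⊔ rowSpace B := by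
  rw [rowSpace, transpose_fromRows, range_mulVecLin_fromColumns]; rfl

lemma rank_submatrix_id {m n n' : Type*} [Fintype n] [Fintype n']
    (A : Matrix m n K) (e : n' ≃ n) : (A.submatrix id e).rank = A.rank := by
  have h : (A.submatrix (id : m → m) e).mulVecLin =
      A.mulVecLin ∘ₗ (LinearEquiv.funCongrLeft K K e.symm : (n' → K) →ₗ[K] (n → K)) := by
    rw [mulVecLin_submatrix]
    exact LinearMap.ext fun x => rfl
  rw [Matrix.rank, Matrix.rank, h, LinearMap.range_comp, LinearEquiv.range, Submodule.map_top]

lemma rank_fromColumns_zero {m n1 n2 : Type*} [Fintype n1] [Fintype n2]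
    (A : Matrix m n1 K) :
    (fromCols A (0 : Matrix m n2 K)).rank = A.rank := by
  rw [Matrix.rank, Matrix.rank, range_mulVecLin_fromColumns, mulVecLin_zero,
    LinearMap.range_zero, sup_bot_eq]

lemma rank_aux {m n n1 n2 : Type*} [Fintype n] [Fintype n1] [Fintype n2]
    (A : Matrix m n K) (Y : Matrix m n1 K) (e : n ≃ n1 ⊕ n2)
    (h1 : ∀ i j, A i (e.symm (Sum.inl j)) = Y i j)
    (h2 : ∀ i j, A i (e.symm (Sum.inr j)) = 0) : A.rank = Y.rank := by
  have hA : A = (fromCols Y (0 : Matrix m n2 K)).submatrix id e := by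
    ext i j
    rcases he : e j with x | x
    · obtain rfl : j = e.symm (Sum.inl x) := by rw [← he, Equiv.symm_apply_apply]
      simp [h1]
    · obtain rfl : j = e.symm (Sum.inr x) := by rw [← he, Equiv.symm_apply_apply]
      simp [h2]
  rw [hA, rank_submatrix_id, rank_fromColumns_zero]

lemma key_split {n m1 m2 m3 m4 : Type*} [Fintype n] [Fintype m1] [Fintype m2] [Fintype m3]
    [Fintype m4]
    (X1 : Matrix m1 n K) (X2 : Matrix m2 n K) (X3 : Matrix m3 n K) (X4 : Matrix m4 n K)
    (h : (fromRows (fromRows X1 X2) (fromRows X3 X4)).rank =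
      (fromRows X1 X2).rank + (fromRows X3 X4).rank) :
    (fromRows X1 X3).rank = X1.rank + X3.rank ∧
      (fromRows X2 X4).rank = X2.rank + X4.rank := by
  rw [rank_eq_finrank_rowSpace, rank_eq_finrank_rowSpace, rank_eq_finrank_rowSpace,
    rowSpace_fromRows (fromRows X1 X2) (fromRows X3 X4)] at h
  have hinf : rowSpace (fromRows X1 X2) ⊓ rowSpace (fromRows X3 X4) = ⊥ := by
    have hs := Submodule.finrank_sup_add_finrank_inf_eq (rowSpace (fromRows X1 X2))
      (rowSpace (fromRows X3 X4))
    rw [h] at hs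
    have : finrank K ↥(rowSpace (fromRows X1 X2) ⊓ rowSpace (fromRows X3 X4)) = 0 := by omega
    exact Submodule.finrank_eq_zero.mp this
  have d13 : rowSpace X1 ⊓ rowSpace X3 = ⊥ := by
    rw [← le_bot_iff, ← hinf]
    exact inf_le_inf (rowSpace_fromRows X1 X2 ▸ le_sup_left)
      (rowSpace_fromRows X3 X4 ▸ le_sup_left)
  have d24 : rowSpace X2 ⊓ rowSpace X4 = ⊥ := by
    rw [← le_bot_iff, ← hinf]
    exact inf_le_inf (rowSpace_fromRows X1 X2 ▸ le_sup_right)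
      (rowSpace_fromRows X3 X4 ▸ le_sup_right)
  constructor
  · rw [rank_eq_finrank_rowSpace, rank_eq_finrank_rowSpace X1, rank_eq_finrank_rowSpace X3,
      rowSpace_fromRows, ← Submodule.finrank_sup_add_finrank_inf_eq, d13, finrank_bot, add_zero]
  · rw [rank_eq_finrank_rowSpace, rank_eq_finrank_rowSpace X2, rank_eq_finrank_rowSpace X4,
      rowSpace_fromRows, ← Submodule.finrank_sup_add_finrank_inf_eq, d24, finrank_bot, add_zero]

end AuxGeneral

noncomputable section Eqv2
open Sum

variable {w1 w2 c1 c2 sn kn : ℕ}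

/-- Reorder big columns `(c₁,c₂,s,k,w₁,w₂)` into plant columns `(w₁,c₁,w₂,c₂,s)` plus `k`. -/
def ePlant : (Fin c1 ⊕ Fin c2 ⊕ Fin sn ⊕ Fin kn ⊕ Fin w1 ⊕ Fin w2) ≃
    ((Fin w1 ⊕ Fin c1 ⊕ Fin w2 ⊕ Fin c2 ⊕ Fin sn) ⊕ Fin kn) where
  toFun := Sum.elim (fun a => inl (inr (inl a)))
    (Sum.elim (fun a => inl (inr (inr (inr (inl a)))))
      (Sum.elim (fun a => inl (inr (inr (inr (inr a)))))
        (Sum.elim inr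
          (Sum.elim (fun a => inl (inl a)) (fun a => inl (inr (inr (inl a))))))))
  invFun := Sum.elim
    (Sum.elim (fun a => inr (inr (inr (inr (inl a)))))
      (Sum.elim inl
        (Sum.elim (fun a => inr (inr (inr (inr (inr a)))))
          (Sum.elim (fun a => inr (inl a)) (fun a => inr (inr (inl a)))))))
    (fun a => inr (inr (inr (inl a))))
  left_inv := by rintro (a | a | a | a | a | a) <;> rfl
  right_inv := by rintro ((a | a | a | a | a) | a) <;> rfl

/-- Reorder big columns into `((w₁,c₁),s)` plus the rest `(c₂,k,w₂)`. -/
def eA1 : (Fin c1 ⊕ Fin c2 ⊕ Fin sn ⊕ Fin kn ⊕ Fin w1 ⊕ Fin w2) ≃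
    (((Fin w1 ⊕ Fin c1) ⊕ Fin sn) ⊕ (Fin c2 ⊕ Fin kn ⊕ Fin w2)) where
  toFun := Sum.elim (fun a => inl (inl (inr a)))
    (Sum.elim (fun a => inr (inl a))
      (Sum.elim (fun a => inl (inr a))
        (Sum.elim (fun a => inr (inr (inl a)))
          (Sum.elim (fun a => inl (inl (inl a))) (fun a => inr (inr (inr a)))))))
  invFun := Sum.elim
    (Sum.elim (Sum.elim (fun a => inr (inr (inr (inr (inl a))))) inl)
      (fun a => inr (inr (inl a))))
    (Sum.elim (fun a => inr (inl a))
      (Sum.elim (fun a => inr (inr (inr (inl a))))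
        (fun a => inr (inr (inr (inr (inr a)))))))
  left_inv := by rintro (a | a | a | a | a | a) <;> rfl
  right_inv := by rintro (((a | a) | a) | (a | a | a)) <;> rfl

/-- Reorder big columns into `((w₂,c₂),s)` plus the rest `(c₁,k,w₁)`. -/
def eA2 : (Fin c1 ⊕ Fin c2 ⊕ Fin sn ⊕ Fin kn ⊕ Fin w1 ⊕ Fin w2) ≃
    (((Fin w2 ⊕ Fin c2) ⊕ Fin sn) ⊕ (Fin c1 ⊕ Fin kn ⊕ Fin w1)) where
  toFun := Sum.elim (fun a => inr (inl a))
    (Sum.elim (fun a => inl (inl (inr a)))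
      (Sum.elim (fun a => inl (inr a))
        (Sum.elim (fun a => inr (inr (inl a)))
          (Sum.elim (fun a => inr (inr (inr a))) (fun a => inl (inl (inl a)))))))
  invFun := Sum.elim
    (Sum.elim (Sum.elim (fun a => inr (inr (inr (inr (inr a))))) (fun a => inr (inl a)))
      (fun a => inr (inr (inl a))))
    (Sum.elim inl
      (Sum.elim (fun a => inr (inr (inr (inl a))))
        (fun a => inr (inr (inr (inr (inl a)))))))
  left_inv := by rintro (a | a | a | a | a | a) <;> rfl
  right_inv := by rintro (((a | a) | a) | (a | a | a)) <;> rfl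

/-- Reorder big columns into desired columns `(w₁,w₂,k)` plus the rest `(c₁,c₂,s)`. -/
def eDes : (Fin c1 ⊕ Fin c2 ⊕ Fin sn ⊕ Fin kn ⊕ Fin w1 ⊕ Fin w2) ≃
    ((Fin w1 ⊕ Fin w2 ⊕ Fin kn) ⊕ (Fin c1 ⊕ Fin c2 ⊕ Fin sn)) where
  toFun := Sum.elim (fun a => inr (inl a))
    (Sum.elim (fun a => inr (inr (inl a)))
      (Sum.elim (fun a => inr (inr (inr a)))
        (Sum.elim (fun a => inl (inr (inr a)))
          (Sum.elim (fun a => inl (inl a)) (fun a => inl (inr (inl a)))))))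
  invFun := Sum.elim
    (Sum.elim (fun a => inr (inr (inr (inr (inl a)))))
      (Sum.elim (fun a => inr (inr (inr (inr (inr a)))))
        (fun a => inr (inr (inr (inl a))))))
    (Sum.elim inl
      (Sum.elim (fun a => inr (inl a)) (fun a => inr (inr (inl a)))))
  left_inv := by rintro (a | a | a | a | a | a) <;> rfl
  right_inv := by rintro ((a | a | a) | (a | a | a)) <;> rfl

/-- Reorder big columns into `(w₁,k)` plus the rest `(c₁,c₂,s,w₂)`. -/
def eB1 : (Fin c1 ⊕ Fin c2 ⊕ Fin sn ⊕ Fin kn ⊕ Fin w1 ⊕ Fin w2) ≃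
    ((Fin w1 ⊕ Fin kn) ⊕ (Fin c1 ⊕ Fin c2 ⊕ Fin sn ⊕ Fin w2)) where
  toFun := Sum.elim (fun a => inr (inl a))
    (Sum.elim (fun a => inr (inr (inl a)))
      (Sum.elim (fun a => inr (inr (inr (inl a))))
        (Sum.elim (fun a => inl (inr a))
          (Sum.elim (fun a => inl (inl a)) (fun a => inr (inr (inr (inr a))))))))
  invFun := Sum.elim
    (Sum.elim (fun a => inr (inr (inr (inr (inl a)))))
      (fun a => inr (inr (inr (inl a)))))
    (Sum.elim inl
      (Sum.elim (fun a => inr (inl a))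
        (Sum.elim (fun a => inr (inr (inl a)))
          (fun a => inr (inr (inr (inr (inr a))))))))
  left_inv := by rintro (a | a | a | a | a | a) <;> rfl
  right_inv := by rintro ((a | a) | (a | a | a | a)) <;> rfl

/-- Reorder big columns into `(w₂,k)` plus the rest `(c₁,c₂,s,w₁)`. -/
def eB2 : (Fin c1 ⊕ Fin c2 ⊕ Fin sn ⊕ Fin kn ⊕ Fin w1 ⊕ Fin w2) ≃
    ((Fin w2 ⊕ Fin kn) ⊕ (Fin c1 ⊕ Fin c2 ⊕ Fin sn ⊕ Fin w1)) where
  toFun := Sum.elim (fun a => inr (inl a))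
    (Sum.elim (fun a => inr (inr (inl a)))
      (Sum.elim (fun a => inr (inr (inr (inl a))))
        (Sum.elim (fun a => inl (inr a))
          (Sum.elim (fun a => inr (inr (inr (inr a)))) (fun a => inl (inl a))))))
  invFun := Sum.elim
    (Sum.elim (fun a => inr (inr (inr (inr (inr a)))))
      (fun a => inr (inr (inr (inl a)))))
    (Sum.elim inl
      (Sum.elim (fun a => inr (inl a))
        (Sum.elim (fun a => inr (inr (inl a)))
          (fun a => inr (inr (inr (inr (inl a))))))))
  left_inv := by rintro (a | a | a | a | a | a) <;> rfl
  right_inv := by rintro ((a | a) | (a | a | a | a)) <;> rfl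

end Eqv2
end MyAux

/-- Conversely, rank additivity of the stacked structured matrix (regularity of
the interconnection of the two local canonical controllers) implies the
plant-interconnection and desired-behavior rank (regularity) conditions. -/
theorem statement8 {w1 w2 c1 c2 sn kn g1 g2 h1 h2 : ℕ}
    (R1 : Matrix (Fin g1) (Fin w1) RF) (M1 : Matrix (Fin g1) (Fin c1) RF)
    (S1 : Matrix (Fin g1) (Fin sn) RF)
    (R2 : Matrix (Fin g2) (Fin w2) RF) (M2 : Matrix (Fin g2) (Fin c2) RF)
    (S2 : Matrix (Fin g2) (Fin sn) RF)
    (W1 : Matrix (Fin h1) (Fin w1) RF) (K1 : Matrix (Fin h1) (Fin kn) RF)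
    (W2 : Matrix (Fin h2) (Fin w2) RF) (K2 : Matrix (Fin h2) (Fin kn) RF)
    (hreg : (Matrix.fromRows
        (Matrix.fromRows (rowA1 (c2 := c2) (kn := kn) (w2 := w2) M1 S1 R1)
          (rowB1 (c1 := c1) (c2 := c2) (sn := sn) (w2 := w2) K1 W1))
        (Matrix.fromRows (rowA2 (c1 := c1) (kn := kn) (w1 := w1) M2 S2 R2)
          (rowB2 (c1 := c1) (c2 := c2) (sn := sn) (w1 := w1) K2 W2))).rank =
      (Matrix.fromRows (rowA1 (c2 := c2) (kn := kn) (w2 := w2) M1 S1 R1)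
          (rowB1 (c1 := c1) (c2 := c2) (sn := sn) (w2 := w2) K1 W1)).rank +
        (Matrix.fromRows (rowA2 (c1 := c1) (kn := kn) (w1 := w1) M2 S2 R2)
          (rowB2 (c1 := c1) (c2 := c2) (sn := sn) (w1 := w1) K2 W2)).rank) :
    (Matrix.fromRows (plantRow1 R1 M1 S1) (plantRow2 R2 M2 S2)).rank =
      (Matrix.fromCols (Matrix.fromCols R1 M1) S1).rank +
        (Matrix.fromCols (Matrix.fromCols R2 M2) S2).rank ∧
    (Matrix.fromRows (desRow1 (w2 := w2) W1 K1) (desRow2 (w1 := w1) W2 K2)).rank =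
      (Matrix.fromCols W1 K1).rank + (Matrix.fromCols W2 K2).rank := by
  obtain ⟨hA, hB⟩ := key_split _ _ _ _ hreg
  refine ⟨?_, ?_⟩
  · have hP : (Matrix.fromRows (rowA1 (c2 := c2) (kn := kn) (w2 := w2) M1 S1 R1)
        (rowA2 (c1 := c1) (kn := kn) (w1 := w1) M2 S2 R2)).rank =
        (Matrix.fromRows (plantRow1 R1 M1 S1) (plantRow2 R2 M2 S2)).rank :=
      rank_aux _ _ ePlant (by rintro (i | i) (j | j | j | j | j) <;> rfl)
        (by rintro (i | i) j <;> rfl)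
    have h1 : (rowA1 (c2 := c2) (kn := kn) (w2 := w2) M1 S1 R1).rank =
        (Matrix.fromCols (Matrix.fromCols R1 M1) S1).rank :=
      rank_aux _ _ eA1 (by rintro i ((j | j) | j) <;> rfl)
        (by rintro i (j | j | j) <;> rfl)
    have h2 : (rowA2 (c1 := c1) (kn := kn) (w1 := w1) M2 S2 R2).rank =
        (Matrix.fromCols (Matrix.fromCols R2 M2) S2).rank :=
      rank_aux _ _ eA2 (by rintro i ((j | j) | j) <;> rfl)
        (by rintro i (j | j | j) <;> rfl)
    rw [← hP, hA, h1, h2]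
  · have hP : (Matrix.fromRows (rowB1 (c1 := c1) (c2 := c2) (sn := sn) (w2 := w2) K1 W1)
        (rowB2 (c1 := c1) (c2 := c2) (sn := sn) (w1 := w1) K2 W2)).rank =
        (Matrix.fromRows (desRow1 (w2 := w2) W1 K1) (desRow2 (w1 := w1) W2 K2)).rank :=
      rank_aux _ _ eDes (by rintro (i | i) (j | j | j) <;> rfl)
        (by rintro (i | i) (j | j | j) <;> rfl)
    have h1 : (rowB1 (c1 := c1) (c2 := c2) (sn := sn) (w2 := w2) K1 W1).rank =
        (Matrix.fromCols W1 K1).rank :=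
      rank_aux _ _ eB1 (by rintro i (j | j) <;> rfl)
        (by rintro i (j | j | j | j) <;> rfl)
    have h2 : (rowB2 (c1 := c1) (c2 := c2) (sn := sn) (w1 := w1) K2 W2).rank =
        (Matrix.fromCols W2 K2).rank :=
      rank_aux _ _ eB2 (by rintro i (j | j) <;> rfl)
        (by rintro i (j | j | j | j) <;> rfl)
    rw [← hP, hB, h1, h2]
end
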